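/- For every ε > 0, the matrix F_ε = [[F11, I₂],[(1/(2ε))I₂, −(1/ε)I₂]] ∈ ℂ^{4×4}, where F11 = [[−1/2, 1],[−1, −1/2]] and I₂ is the 2×2 identity, is Hurwitz: every eigenvalue of F_ε has strictly negative real part. -/

import Mathlib

open Matrix

private lemma hurwitz_aux (c x y : ℝ) (hc : 0 < c) (hx : 0 ≤ x)
    (h1 : x * x - y * y + (2⁻¹ + c) * x + y = 0)
    (h2 : x * y + y * x + (2⁻¹ + c) * y - (x + c) = 0) : False := by
  have hy : 0 < y := by nlinarith
  have hy1 : 1 ≤ y := by nlinarith [mul_nonneg hx hx, mul_nonneg hx hc.le]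
  nlinarith [mul_nonneg (by linarith : (0:ℝ) ≤ y - 1)
    (by linarith : (0:ℝ) ≤ 2 * x + 2⁻¹ + c)]

set_option maxHeartbeats 1000000 in
theorem example_Hurwitz (ε : ℝ) (hε : 0 < ε) :
    ∀ μ ∈ spectrum ℂ
      (fromBlocks (!![-1/2, 1; -1, -1/2] : Matrix (Fin 2) (Fin 2) ℂ)
        (1 : Matrix (Fin 2) (Fin 2) ℂ)
        ((1 / (2 * (ε : ℂ))) • (1 : Matrix (Fin 2) (Fin 2) ℂ))
        ((-(1 / (ε : ℂ))) • (1 : Matrix (Fin 2) (Fin 2) ℂ))),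
      μ.re < 0 := by
  intro μ hμ
  by_contra hcon
  push_neg at hcon
  set F := (fromBlocks (!![-1/2, 1; -1, -1/2] : Matrix (Fin 2) (Fin 2) ℂ)
        (1 : Matrix (Fin 2) (Fin 2) ℂ)
        ((1 / (2 * (ε : ℂ))) • (1 : Matrix (Fin 2) (Fin 2) ℂ))
        ((-(1 / (ε : ℂ))) • (1 : Matrix (Fin 2) (Fin 2) ℂ))) with hF
  rw [spectrum.mem_iff] at hμ
  have hdet : det (algebraMap ℂ (Matrix (Fin 2 ⊕ Fin 2) (Fin 2 ⊕ Fin 2) ℂ) μ - F) = 0 := by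
    by_contra hne
    exact hμ ((isUnit_iff_isUnit_det _).2 (isUnit_iff_ne_zero.2 hne))
  rw [← det_submatrix_equiv_self finSumFinEquiv.symm] at hdet
  have hM : ((algebraMap ℂ (Matrix (Fin 2 ⊕ Fin 2) (Fin 2 ⊕ Fin 2) ℂ) μ - F).submatrix
      finSumFinEquiv.symm finSumFinEquiv.symm) =
      !![μ + 1/2, -1, -1, 0;
         1, μ + 1/2, 0, -1;
         -(1/(2*(ε:ℂ))), 0, μ + 1/(ε:ℂ), 0;
         0, -(1/(2*(ε:ℂ))), 0, μ + 1/(ε:ℂ)] := by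
    ext i j
    fin_cases i <;> fin_cases j <;>
      simp [hF, Matrix.algebraMap_matrix_apply, Matrix.fromBlocks, Matrix.one_apply,
        finSumFinEquiv, Fin.addCases, Fin.ext_iff, Fin.castLT] <;>
      norm_num [Fin.subNat, Matrix.one_apply,
        show ((2:Fin 4):ℕ) = 2 from rfl, show ((3:Fin 4):ℕ) = 3 from rfl,
        show ((0:Fin 4):ℕ) = 0 from rfl, show ((1:Fin 4):ℕ) = 1 from rfl] <;> simp
  rw [hM] at hdet
  have hpoly : (!![μ + 1/2, -1, -1, 0;
         1, μ + 1/2, 0, -1;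
         -(1/(2*(ε:ℂ))), 0, μ + 1/(ε:ℂ), 0;
         0, -(1/(2*(ε:ℂ))), 0, μ + 1/(ε:ℂ)]).det =
      ((μ + 1/(ε:ℂ))*(μ + 1/2) - 1/(2*(ε:ℂ)))^2 + (μ + 1/(ε:ℂ))^2 := by
    simp [Matrix.det_succ_row_zero, Fin.sum_univ_succ, Fin.succAbove]
    ring
  rw [hpoly] at hdet
  have hc : (1:ℂ)/(ε:ℂ) = (((1/ε : ℝ)):ℂ) := by push_cast; ring
  have hc2 : (1:ℂ)/(2*(ε:ℂ)) = (((1/ε : ℝ)):ℂ)/2 := by push_cast; ring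
  rw [hc, hc2] at hdet
  set c : ℝ := 1/ε with hcdef
  have hc0 : 0 < c := by positivity
  have key : ((μ*μ + (1/2 + (c:ℂ))*μ + Complex.I*(μ + (c:ℂ)))) *
      ((μ*μ + (1/2 + (c:ℂ))*μ - Complex.I*(μ + (c:ℂ)))) = 0 := by
    linear_combination hdet - (μ + (c:ℂ))^2 * Complex.I_sq
  rcases mul_eq_zero.1 key with h | h <;>
    rw [Complex.ext_iff] at h <;>
    simp [Complex.mul_re, Complex.mul_im] at h <;>
    obtain ⟨h1, h2⟩ := h
  · exact hurwitz_aux c μ.re (-μ.im) hc0 hcon (by linarith) (by nlinarith)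
  · exact hurwitz_aux c μ.re μ.im hc0 hcon (by linarith) (by nlinarith)
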